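/- For every eventually periodic infinite word w = u·(z)^ω over {a,b} with z nonempty, and every transcendental λ ∈ (1/2, 1), the discounted counts satisfy v_a(w) ≠ v_b(w). -/

import Mathlib

/-- The eventually periodic infinite word `u · z^ω`. -/
def lassoWord (u z : List Bool) (i : ℕ) : Bool :=
  if i < u.length then u.getD i false else z.getD ((i - u.length) % z.length) false

/-- Discounted count of `a`'s (`true`) in an infinite word. -/
noncomputable def vA (lam : ℝ) (w : ℕ → Bool) : ℝ :=
  ∑' i : ℕ, if w i then lam ^ i else 0

/-- Discounted count of `b`'s (`false`) in an infinite word. -/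
noncomputable def vB (lam : ℝ) (w : ℕ → Bool) : ℝ :=
  ∑' i : ℕ, if w i then 0 else lam ^ i

open Polynomial Finset in
theorem lasso_va_ne_vb (u z : List Bool) (hz : z ≠ [])
    (lam : ℝ) (htr : Transcendental ℚ lam) (hlam : 1/2 < lam) (hlam1 : lam < 1) :
    vA lam (lassoWord u z) ≠ vB lam (lassoWord u z) := by
  intro heq
  set n := u.length with hn
  set m := z.length with hmdef
  have hm : 0 < m := List.length_pos_iff.mpr hz
  have hl0 : (0:ℝ) ≤ lam := by linarith
  set w := lassoWord u z with hw
  set c : ℕ → ℝ := fun i => if w i then (1:ℝ) else -1 with hc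
  -- periodicity
  have hper : ∀ i, w (n + i + m) = w (n + i) := by
    intro i
    simp only [hw, lassoWord]
    have h1 : ¬ (n + i + m < n) := by omega
    have h2 : ¬ (n + i < n) := by omega
    rw [if_neg h1, if_neg h2]
    congr 1
    have : n + i + m - n = (n + i - n) + m := by omega
    rw [this, Nat.add_mod_right]
  -- summability
  have hgeo : Summable (fun i : ℕ => lam ^ i) := summable_geometric_of_lt_one hl0 hlam1
  have hsum : ∀ (d : ℕ), Summable (fun i => c (d + i) * lam ^ i) := by
    intro d
    apply Summable.of_norm_bounded hgeo
    intro i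
    have hcb : |c (d + i)| = 1 := by simp only [hc]; split <;> norm_num
    rw [Real.norm_eq_abs, abs_mul, hcb, one_mul, abs_pow, abs_of_nonneg hl0]
  have hsum0 : Summable (fun i => c i * lam ^ i) := by simpa using hsum 0
  -- vA and vB summable
  have hsA : Summable (fun i : ℕ => if w i then lam ^ i else 0) := by
    apply Summable.of_nonneg_of_le (fun i => by positivity) _ hgeo
    intro i; split <;> simp [pow_nonneg hl0]
  have hsB : Summable (fun i : ℕ => if w i then 0 else lam ^ i) := by
    apply Summable.of_nonneg_of_le (fun i => by positivity) _ hgeo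
    intro i; split <;> simp [pow_nonneg hl0]
  -- SG = 0
  have hSG : ∑' i, c i * lam ^ i = 0 := by
    have : ∀ i, c i * lam ^ i =
        (if w i then lam ^ i else 0) - (if w i then 0 else lam ^ i) := by
      intro i; simp only [hc]; split <;> ring
    rw [tsum_congr this, Summable.tsum_sub hsA hsB]
    have : vA lam w - vB lam w = 0 := by rw [heq]; ring
    simpa [vA, vB] using this
  set P1 : ℝ := ∑ i ∈ range n, c i * lam ^ i with hP1
  set Q : ℝ := ∑ i ∈ range m, c (n + i) * lam ^ i with hQ
  set SF : ℝ := ∑' i, c (n + i) * lam ^ i with hSF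
  -- split at n
  have hsplit : P1 + lam ^ n * SF = 0 := by
    have h1 := Summable.sum_add_tsum_nat_add n hsum0
    rw [hSG] at h1
    have h2 : ∑' i, c (i + n) * lam ^ (i + n) = lam ^ n * SF := by
      rw [hSF, ← tsum_mul_left]
      apply tsum_congr
      intro i
      rw [pow_add, Nat.add_comm i n]
      ring
    rw [h2] at h1
    linarith [h1]
  -- functional equation for SF
  have hfe : (1 - lam ^ m) * SF = Q := by
    have h1 := Summable.sum_add_tsum_nat_add m (hsum n)
    have h2 : ∑' i, c (n + (i + m)) * lam ^ (i + m) = lam ^ m * SF := by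
      rw [hSF, ← tsum_mul_left]
      apply tsum_congr
      intro i
      have : c (n + (i + m)) = c (n + i) := by
        simp only [hc]
        rw [show n + (i + m) = n + i + m by ring, hper]
      rw [this, pow_add]
      ring
    rw [h2] at h1
    linarith [h1]
  have hkey : (1 - lam ^ m) * P1 + lam ^ n * Q = 0 := by
    have : (1 - lam ^ m) * P1 + lam ^ n * ((1 - lam ^ m) * SF) =
        (1 - lam ^ m) * (P1 + lam ^ n * SF) := by ring
    rw [hfe] at this
    rw [this, hsplit, mul_zero]
  -- build the polynomial
  set d : ℕ → ℚ := fun i => if w i then (1:ℚ) else -1 with hd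
  set A : ℚ[X] := ∑ i ∈ range n, C (d i) * X ^ i with hA
  set B : ℚ[X] := ∑ i ∈ range m, C (d (n + i)) * X ^ i with hB
  set p : ℚ[X] := (1 - X ^ m) * A + X ^ n * B with hp
  have hcast : ∀ i, ((d i : ℚ) : ℝ) = c i := by
    intro i; simp only [hd, hc]; split <;> norm_num
  have heval : (aeval lam) p = 0 := by
    have hevA : (aeval lam) A = P1 := by
      simp only [hA, map_sum, map_mul, map_pow, aeval_X, aeval_C, hP1]
      exact Finset.sum_congr rfl fun i _ => by rw [show ((algebraMap ℚ ℝ) (d i)) = c i from hcast i]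
    have hevB : (aeval lam) B = Q := by
      simp only [hB, map_sum, map_mul, map_pow, aeval_X, aeval_C, hQ]
      exact Finset.sum_congr rfl fun i _ => by rw [show ((algebraMap ℚ ℝ) (d (n+i))) = c (n+i) from hcast (n+i)]
    simp only [hp, map_add, map_mul, map_sub, map_pow, map_one, aeval_X, hevA, hevB]
    exact hkey
  -- p ≠ 0 via constant coefficient
  have hd0 : ∀ i, d i ≠ 0 := by intro i; simp only [hd]; split <;> norm_num
  have hAc0 : A.coeff 0 = if 0 < n then d 0 else 0 := by
    rcases Nat.eq_zero_or_pos n with h | h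
    · simp [hA, h]
    · rw [if_pos h, hA, Polynomial.finset_sum_coeff,
        Finset.sum_eq_single 0 (fun i _ hi => by
          simp [Polynomial.coeff_C_mul, Polynomial.coeff_X_pow, Ne.symm hi])
          (fun hnot => absurd (Finset.mem_range.mpr h) hnot)]
      simp
  have hBc0 : B.coeff 0 = d n := by
    rw [hB, Polynomial.finset_sum_coeff,
      Finset.sum_eq_single 0 (fun i _ hi => by
        simp [Polynomial.coeff_C_mul, Polynomial.coeff_X_pow, Ne.symm hi])
        (fun hnot => absurd (Finset.mem_range.mpr hm) hnot)]
    simp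
  have hp0 : p.coeff 0 = d 0 := by
    have hcoeff : p.coeff 0 = (1 - (X:ℚ[X]) ^ m).coeff 0 * A.coeff 0 + ((X:ℚ[X]) ^ n * B).coeff 0 := by
      simp [hp, Polynomial.mul_coeff_zero]
    have h1m : (1 - (X:ℚ[X]) ^ m).coeff 0 = 1 := by
      simp [Polynomial.coeff_X_pow, hm.ne]
    rcases Nat.eq_zero_or_pos n with h | h
    · rw [hcoeff, h1m, hAc0, if_neg (by omega)]
      rw [h] at hBc0 ⊢
      simp [hBc0]
    · have hXB : ((X:ℚ[X]) ^ n * B).coeff 0 = 0 := by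
        rw [mul_comm, Polynomial.coeff_mul_X_pow']
        simp [Nat.not_le.mpr h]
      rw [hcoeff, h1m, hAc0, if_pos h, hXB, one_mul, add_zero]
  have hpne : p ≠ 0 := by
    intro h0
    exact hd0 0 (by rw [← hp0, h0, Polynomial.coeff_zero])
  exact hpne (transcendental_iff.mp htr p heval)
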